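/- Let Σ be a set of pairs of words over ℕ, let Λ be the fully invariant congruence generated by Σ, and let u, v be words over ℕ. Then (u,v) ∈ Λ if and only if every semigroup that satisfies all identities in Σ satisfies the identity (u,v). -/

import Mathlib

/-- A semigroup `S` satisfies the identity `(u, v)` over the alphabet `X` if every map
`X → S` sends `u` and `v` (under the induced semigroup homomorphism) to the same
element. -/
def SatisfiesId (S : Type*) [Semigroup S] {X : Type*}
    (p : FreeSemigroup X × FreeSemigroup X) : Prop :=
  ∀ σ : X → S, FreeSemigroup.lift σ p.1 = FreeSemigroup.lift σ p.2

/-- `spow x n` is the power `x ^ (n + 1)` in a semigroup. -/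
def spow {S : Type*} [Semigroup S] (x : S) : ℕ → S
  | 0 => x
  | n + 1 => spow x n * x

/-- `z` is an (absorbing) zero element of `S`. -/
def IsZeroElem {S : Type*} [Mul S] (z : S) : Prop :=
  ∀ s : S, z * s = z ∧ s * z = z

/-- A semigroup is nil if it has a zero element `z` and every element `x` has some power
`x ^ n`, `n ≥ 1`, equal to `z`. -/
def IsNilSemigroup (S : Type*) [Semigroup S] : Prop :=
  ∃ z : S, IsZeroElem z ∧ ∀ x : S, ∃ n : ℕ, spow x n = z

/-- The fully invariant congruence on `FreeSemigroup ℕ` generated by a set `E` of pairs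
of words: the congruence generated by all pairs `(φ u, φ v)` with `(u, v) ∈ E` and `φ` a
semigroup endomorphism of `FreeSemigroup ℕ`. -/
def ficCongruence (E : Set (FreeSemigroup ℕ × FreeSemigroup ℕ)) : Con (FreeSemigroup ℕ) :=
  conGen (fun a b => ∃ p ∈ E, ∃ φ : FreeSemigroup ℕ →ₙ* FreeSemigroup ℕ,
    a = φ p.1 ∧ b = φ p.2)

/-- The list of letters of a word in the free semigroup on `ℕ`. -/
def wordLetters (u : FreeSemigroup ℕ) : List ℕ := u.head :: u.tail

/-- A pair of words over `ℕ` is balanced if every letter occurs the same number of times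
in both components. -/
def BalancedPair (p : FreeSemigroup ℕ × FreeSemigroup ℕ) : Prop :=
  ∀ x : ℕ, (wordLetters p.1).count x = (wordLetters p.2).count x

/-- Completeness of equational logic for semigroups: `(u, v)` lies in the fully
invariant congruence generated by `E` iff every semigroup satisfying all identities in
`E` satisfies the identity `(u, v)`. -/
theorem ficCongruence_iff_satisfied (E : Set (FreeSemigroup ℕ × FreeSemigroup ℕ))
    (u v : FreeSemigroup ℕ) :
    ficCongruence E u v
      ↔ ∀ S : Semigrp, (∀ p ∈ E, SatisfiesId S p) → SatisfiesId S (u, v) := by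
  constructor
  · intro h S hE σ
    revert h
    have key : ficCongruence E ≤ Con.ker (FreeSemigroup.lift σ) := by
      apply Con.conGen_le.mpr
      rintro a b ⟨p, hp, φ, rfl, rfl⟩
      have := hE p hp (fun n => FreeSemigroup.lift σ (φ (FreeSemigroup.of n)))
      show FreeSemigroup.lift σ (φ p.1) = FreeSemigroup.lift σ (φ p.2)
      have hcomp : ∀ w, FreeSemigroup.lift
          (fun n => FreeSemigroup.lift σ (φ (FreeSemigroup.of n))) w
          = FreeSemigroup.lift σ (φ w) := by
        intro w
        have : FreeSemigroup.lift (fun n => FreeSemigroup.lift σ (φ (FreeSemigroup.of n)))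
            = (FreeSemigroup.lift σ).comp φ := by
          apply FreeSemigroup.hom_ext
          funext n
          simp
        rw [this]; rfl
      rw [← hcomp, ← hcomp]
      exact this
    exact fun h => key h
  · intro h
    set c := ficCongruence E with hc
    let q : FreeSemigroup ℕ →ₙ* ULift c.Quotient :=
      MulEquiv.ulift.symm.toMulHom.comp ⟨((↑) : FreeSemigroup ℕ → c.Quotient), fun _ _ => rfl⟩
    have hq : ∀ a b : FreeSemigroup ℕ, q a = q b → c a b := by
      intro a b hab
      have : (↑a : c.Quotient) = ↑b := MulEquiv.ulift.symm.injective hab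
      exact (Con.eq c).mp this
    have hq' : ∀ a b : FreeSemigroup ℕ, c a b → q a = q b := by
      intro a b hab
      show MulEquiv.ulift.symm _ = MulEquiv.ulift.symm _
      congr 1
      exact (Con.eq c).mpr hab
    let S : Semigrp := Semigrp.of (ULift c.Quotient)
    have hE : ∀ p ∈ E, SatisfiesId S p := by
      intro p hp σ
      obtain ⟨σ', hσ'⟩ : ∃ σ' : ℕ → FreeSemigroup ℕ, ∀ n, q (σ' n) = σ n := by
        refine ⟨fun n => (σ n).down.out, fun n => ?_⟩
        show MulEquiv.ulift.symm ((↑((σ n).down.out) : c.Quotient)) = σ n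
        have h1 : (↑((σ n).down.out) : c.Quotient) = (σ n).down := by
          exact Quotient.out_eq _
        rw [h1]
        rfl
      have hcomp : FreeSemigroup.lift σ = q.comp (FreeSemigroup.lift σ') := by
        apply FreeSemigroup.hom_ext
        funext n
        exact (hσ' n).symm
      show FreeSemigroup.lift σ p.1 = FreeSemigroup.lift σ p.2
      rw [hcomp]
      exact hq' _ _ (ConGen.Rel.of _ _ ⟨p, hp, FreeSemigroup.lift σ', rfl, rfl⟩)
    have hthis := h S hE (fun n => q (FreeSemigroup.of n))
    have hcomp : FreeSemigroup.lift (fun n => q (FreeSemigroup.of n)) = q := by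
      apply FreeSemigroup.hom_ext
      funext n
      simp
    exact hq u v ((DFunLike.congr_fun hcomp u).symm.trans
      (hthis.trans (DFunLike.congr_fun hcomp v)))
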